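/- For an orthonormal basis {f_α : α = 1,…,n²} of M_n (Hilbert–Schmidt inner product), the operators Q_α := Σ_{i,j=1}^n e_{ij} ⊗ f_α e_{ij} f_α* on ℂⁿ ⊗ ℂⁿ are mutually orthogonal projections: Q_α* = Q_α, Q_α Q_β = δ_{αβ} Q_α. -/

import Mathlib

open Matrix BigOperators Kronecker

noncomputable def Qproj {n : ℕ} (f : Fin (n ^ 2) → Matrix (Fin n) (Fin n) ℂ)
    (α : Fin (n ^ 2)) : Matrix (Fin n × Fin n) (Fin n × Fin n) ℂ :=
  ∑ i : Fin n, ∑ j : Fin n,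
    (Matrix.single i j (1 : ℂ)) ⊗ₖ
      (f α * Matrix.single i j (1 : ℂ) * (f α)ᴴ)

lemma Qentry {n : ℕ} (f : Fin (n ^ 2) → Matrix (Fin n) (Fin n) ℂ)
    (α : Fin (n ^ 2)) (a b c d : Fin n) :
    Qproj f α (a, b) (c, d) = f α b a * star (f α d c) := by
  simp [Qproj, Matrix.sum_apply, Matrix.mul_apply, Matrix.single,
    conjTranspose_apply, Finset.sum_ite_eq, ite_and, Finset.mul_sum,
    Finset.sum_mul, mul_comm]

/-- For an orthonormal basis `{f_α}` of `M_n`, the operators `Q_α` are mutually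
orthogonal projections: `Q_α* = Q_α` and `Q_α Q_β = δ_{αβ} Q_α`. -/
theorem stmt4 {n : ℕ} (f : Fin (n ^ 2) → Matrix (Fin n) (Fin n) ℂ)
    (hortho : ∀ α β, ((f α)ᴴ * f β).trace = if α = β then 1 else 0)
    (hspan : Submodule.span ℂ (Set.range f) = ⊤) :
    (∀ α, (Qproj f α)ᴴ = Qproj f α) ∧
    (∀ α β, Qproj f α * Qproj f β = if α = β then Qproj f α else 0) := by
  constructor
  · intro α
    ext ⟨a, b⟩ ⟨c, d⟩
    simp only [conjTranspose_apply, Qentry]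
    simp [mul_comm]
  · intro α β
    have htr : ∀ α β, (∑ p : Fin n, ∑ q : Fin n, star (f α q p) * f β q p)
        = if α = β then 1 else 0 := by
      intro α β
      rw [← hortho α β, Matrix.trace]
      simp [Matrix.mul_apply, conjTranspose_apply, Matrix.diag]
    ext ⟨a, b⟩ ⟨c, d⟩
    rw [Matrix.mul_apply]
    have : ∀ x : Fin n × Fin n,
        Qproj f α (a, b) x * Qproj f β x (c, d)
        = (f α b a * star (f β d c)) * (star (f α x.2 x.1) * f β x.2 x.1) := by
      rintro ⟨p, q⟩
      rw [Qentry, Qentry]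
      ring
    rw [Finset.sum_congr rfl fun x _ => this x, ← Finset.mul_sum]
    rw [show (∑ x : Fin n × Fin n, star (f α x.2 x.1) * f β x.2 x.1)
        = ∑ p : Fin n, ∑ q : Fin n, star (f α q p) * f β q p from
      (Fintype.sum_prod_type _)]
    rw [htr α β]
    split_ifs with h
    · subst h; simp [Qentry]
    · simp [Matrix.zero_apply]
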